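/- Let ū₀ ∈ W²,∞_loc(0,∞) be globally Lipschitz continuous with (ū₀)_r ∈ W^{1,∞}(0,∞) or κ_{ū₀} ∈ L∞(0,∞), and assume the compatibility condition: there exist C, r₀ > 0 such that |c + κ_{ū₀}(r)| ≤ C·r for almost every 0 < r ≤ r₀. Then there exists a constant C̄ > 0 such that ū⁺(t,r) := ū₀(r) + C̄·t is a viscosity super-solution and ū⁻(t,r) := ū₀(r) − C̄·t is a viscosity sub-solution of (E) on [0,∞)×(0,∞) with initial datum ū₀. -/

import Mathlib

open Set Real Filter
open scoped ENNReal ContDiff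

noncomputable def Fbar (c r q Y : ℝ) : ℝ :=
  c * Real.sqrt (1 + r ^ 2 * q ^ 2) + q * ((2 + r ^ 2 * q ^ 2) / (1 + r ^ 2 * q ^ 2)) +
    r * Y / (1 + r ^ 2 * q ^ 2)

def Dom (T : ℝ≥0∞) : Set (ℝ × ℝ) :=
  {p : ℝ × ℝ | 0 ≤ p.1 ∧ ENNReal.ofReal p.1 < T ∧ 0 < p.2}

noncomputable def Dt (φ : ℝ × ℝ → ℝ) (t r : ℝ) : ℝ := deriv (fun s => φ (s, r)) t

noncomputable def Dr (φ : ℝ × ℝ → ℝ) (t r : ℝ) : ℝ := deriv (fun ρ => φ (t, ρ)) r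

noncomputable def Drr (φ : ℝ × ℝ → ℝ) (t r : ℝ) : ℝ :=
  deriv (fun ρ => deriv (fun ρ' => φ (t, ρ')) ρ) r

def IsSubSol (c : ℝ) (T : ℝ≥0∞) (u0 : ℝ → ℝ) (u : ℝ → ℝ → ℝ) : Prop :=
  UpperSemicontinuousOn (fun p : ℝ × ℝ => u p.1 p.2) (Dom T) ∧
  ∀ φ : ℝ × ℝ → ℝ, ContDiff ℝ 2 φ → ∀ t r : ℝ, (t, r) ∈ Dom T →
    IsLocalMaxOn (fun p : ℝ × ℝ => u p.1 p.2 - φ p) (Dom T) (t, r) →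
    (0 < t → r * Dt φ t r ≤ Fbar c r (Dr φ t r) (Drr φ t r)) ∧
    (t = 0 → u 0 r ≤ u0 r)

def IsSuperSol (c : ℝ) (T : ℝ≥0∞) (u0 : ℝ → ℝ) (u : ℝ → ℝ → ℝ) : Prop :=
  LowerSemicontinuousOn (fun p : ℝ × ℝ => u p.1 p.2) (Dom T) ∧
  ∀ φ : ℝ × ℝ → ℝ, ContDiff ℝ 2 φ → ∀ t r : ℝ, (t, r) ∈ Dom T →
    IsLocalMinOn (fun p : ℝ × ℝ => u p.1 p.2 - φ p) (Dom T) (t, r) →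
    (0 < t → Fbar c r (Dr φ t r) (Drr φ t r) ≤ r * Dt φ t r) ∧
    (t = 0 → u0 r ≤ u 0 r)

def IsSol (c : ℝ) (T : ℝ≥0∞) (u0 : ℝ → ℝ) (u : ℝ → ℝ → ℝ) : Prop :=
  ContinuousOn (fun p : ℝ × ℝ => u p.1 p.2) (Dom T) ∧
  IsSubSol c T u0 u ∧ IsSuperSol c T u0 u

def W2Loc (u0 : ℝ → ℝ) : Prop :=
  (∀ r : ℝ, 0 < r → DifferentiableAt ℝ u0 r) ∧
  ∀ r : ℝ, 0 < r → ∃ ε > (0:ℝ), ∃ L : NNReal, LipschitzOnWith L (deriv u0) (Metric.ball r ε)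

noncomputable def kappa (u0 : ℝ → ℝ) (r : ℝ) : ℝ :=
  deriv u0 r * ((2 + (r * deriv u0 r) ^ 2) / (1 + (r * deriv u0 r) ^ 2) ^ ((3:ℝ)/2)) +
    r * deriv (deriv u0) r / (1 + (r * deriv u0 r) ^ 2) ^ ((3:ℝ)/2)

def KappaBdd (u0 : ℝ → ℝ) (K : ℝ) : Prop :=
  ∀ r : ℝ, 0 < r → DifferentiableAt ℝ (deriv u0) r → |kappa u0 r| ≤ K


/-- `(ū₀)_r ∈ W^{1,∞}(0,∞)`: the derivative is bounded and (globally) Lipschitz on `(0,∞)`. -/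
def DerivW1inf (u0 : ℝ → ℝ) : Prop :=
  (∃ M : ℝ, ∀ r : ℝ, 0 < r → |deriv u0 r| ≤ M) ∧
  ∃ L : NNReal, LipschitzOnWith L (deriv u0) (Set.Ioi 0)

/-- Compatibility condition: `|c + κ_{ū₀}(r)| ≤ C r` for (a.e.) `0 < r ≤ r₀`. -/
def Compat (c : ℝ) (u0 : ℝ → ℝ) (C r0 : ℝ) : Prop :=
  ∀ r : ℝ, 0 < r → r ≤ r0 → DifferentiableAt ℝ (deriv u0) r → |c + kappa u0 r| ≤ C * r


open MeasureTheory intervalIntegral Topology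

lemma lip_deriv_norm_le {G : ℝ → ℝ} {L : NNReal} (hG : LipschitzWith L G) (x : ℝ) :
    ‖deriv G x‖ ≤ L := by
  by_cases h : DifferentiableAt ℝ G x
  · exact h.hasDerivAt.le_of_lipschitz hG
  · simp [deriv_zero_of_not_differentiableAt h, NNReal.coe_nonneg]

lemma lip_integrable_deriv {G : ℝ → ℝ} {L : NNReal} (hG : LipschitzWith L G) (a b : ℝ) :
    IntervalIntegrable (deriv G) volume a b := by
  have hm : AEStronglyMeasurable (deriv G) (volume.restrict (Set.uIoc a b)) :=
    (measurable_deriv G).aestronglyMeasurable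
  have hc : IntervalIntegrable (fun _ : ℝ => (L : ℝ)) volume a b :=
    _root_.intervalIntegrable_const
  refine hc.mono_fun hm (ae_of_all _ fun x => ?_)
  simpa [Real.norm_eq_abs, abs_of_nonneg (NNReal.coe_nonneg L)] using lip_deriv_norm_le hG x

/-- endpoint averaging: `(n+1) ∫_c^{c+1/(n+1)} G → G c`. -/
lemma lip_avg_tendsto {G : ℝ → ℝ} {L : NNReal} (hG : LipschitzWith L G) (c : ℝ) :
    Tendsto (fun n : ℕ => ((n : ℝ) + 1) * ∫ x in c..(c + ((n : ℝ) + 1)⁻¹), G x)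
      atTop (𝓝 (G c)) := by
  have key : ∀ n : ℕ, ‖(((n:ℝ)+1) * ∫ x in c..(c + ((n : ℝ)+1)⁻¹), G x) - G c‖
      ≤ (L : ℝ) * ((n:ℝ)+1)⁻¹ := by
    intro n
    have hn : (0:ℝ) < (n:ℝ) + 1 := by positivity
    have hinv : (0:ℝ) ≤ ((n:ℝ)+1)⁻¹ := by positivity
    have hle : c ≤ c + ((n:ℝ)+1)⁻¹ := by linarith
    have h1 : (∫ x in c..(c + ((n : ℝ)+1)⁻¹), G x) - ((n:ℝ)+1)⁻¹ * G c
        = ∫ x in c..(c + ((n : ℝ)+1)⁻¹), (G x - G c) := by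
      rw [intervalIntegral.integral_sub (hG.continuous.intervalIntegrable _ _)
        _root_.intervalIntegrable_const, intervalIntegral.integral_const]
      simp only [smul_eq_mul]
      ring
    have h2 : ‖∫ x in c..(c + ((n : ℝ)+1)⁻¹), (G x - G c)‖
        ≤ (L : ℝ) * ((n:ℝ)+1)⁻¹ * |(c + ((n:ℝ)+1)⁻¹) - c| := by
      apply intervalIntegral.norm_integral_le_of_norm_le_const
      intro x hx
      rw [Set.uIoc_of_le hle] at hx
      have hd : |G x - G c| ≤ (L:ℝ) * |x - c| := by
        simpa [Real.dist_eq] using hG.dist_le_mul x c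
      refine hd.trans ?_
      have hxc : |x - c| ≤ ((n:ℝ)+1)⁻¹ := by
        rw [abs_of_nonneg (by linarith [hx.1.le])]
        linarith [hx.2]
      exact mul_le_mul_of_nonneg_left hxc (NNReal.coe_nonneg L)
    have e : (((n:ℝ)+1) * ∫ x in c..(c + ((n : ℝ)+1)⁻¹), G x) - G c
        = ((n:ℝ)+1) * ((∫ x in c..(c + ((n : ℝ)+1)⁻¹), G x) - ((n:ℝ)+1)⁻¹ * G c) := by
      have hn : ((n:ℝ)+1) ≠ 0 := by positivity
      rw [mul_sub, ← mul_assoc, mul_inv_cancel₀ hn, one_mul]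
    calc ‖(((n:ℝ)+1) * ∫ x in c..(c + ((n : ℝ)+1)⁻¹), G x) - G c‖
        = ((n:ℝ)+1) * ‖(∫ x in c..(c + ((n : ℝ)+1)⁻¹), G x) - ((n:ℝ)+1)⁻¹ * G c‖ := by
          rw [e, norm_mul, Real.norm_eq_abs ((n:ℝ)+1), abs_of_nonneg hn.le]
      _ ≤ ((n:ℝ)+1) * ((L : ℝ) * ((n:ℝ)+1)⁻¹ * |(c + ((n:ℝ)+1)⁻¹) - c|) := by
          rw [h1]; exact mul_le_mul_of_nonneg_left h2 hn.le
      _ = (L : ℝ) * ((n:ℝ)+1)⁻¹ := by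
          rw [show (c + ((n:ℝ)+1)⁻¹) - c = ((n:ℝ)+1)⁻¹ by ring, abs_of_nonneg hinv]
          field_simp
  have h0 : Tendsto (fun n : ℕ => (L:ℝ) * ((n:ℝ)+1)⁻¹) atTop (𝓝 0) := by
    have h := tendsto_one_div_add_atTop_nhds_zero_nat (𝕜 := ℝ)
    have := h.const_mul (L:ℝ)
    simpa [one_div] using this
  have hsq := squeeze_zero_norm key h0
  have h' : Tendsto (fun n : ℕ => ((((n:ℝ)+1) * ∫ x in c..(c + ((n : ℝ)+1)⁻¹), G x) - G c) + G c)
      atTop (𝓝 (0 + G c)) := hsq.add tendsto_const_nhds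
  simpa using h'

lemma lip_ftc {G : ℝ → ℝ} {L : NNReal} (hG : LipschitzWith L G) {a b : ℝ} (hab : a ≤ b) :
    G b - G a = ∫ x in a..b, deriv G x := by
  set h : ℕ → ℝ := fun n => ((n : ℝ) + 1)⁻¹ with hh
  have hpos : ∀ n, 0 < h n := fun n => by positivity
  set F : ℕ → ℝ → ℝ := fun n x => ((n : ℝ) + 1) * (G (x + h n) - G x) with hF
  -- each F n is continuous
  have hFc : ∀ n, Continuous (F n) := fun n =>
    continuous_const.mul ((hG.continuous.comp (continuous_id.add continuous_const)).sub
      hG.continuous)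
  -- pointwise convergence at differentiability points
  have hconv : ∀ᵐ x, Tendsto (fun n => F n x) atTop (𝓝 (deriv G x)) := by
    filter_upwards [hG.ae_differentiableAt (μ := volume)] with x hx
    have hs := hasDerivAt_iff_tendsto_slope.mp hx.hasDerivAt
    have ht : Tendsto (fun n : ℕ => x + h n) atTop (𝓝[≠] x) := by
      rw [tendsto_nhdsWithin_iff]
      constructor
      · have : Tendsto h atTop (𝓝 0) := by
          have := tendsto_one_div_add_atTop_nhds_zero_nat (𝕜 := ℝ)
          simpa [hh, one_div] using this
        simpa using tendsto_const_nhds.add this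
      · exact Eventually.of_forall fun n => by
          simp [Set.mem_compl_iff, (hpos n).ne']
    have := hs.comp ht
    refine this.congr fun n => ?_
    show slope G x (x + h n) = F n x
    rw [slope_def_field, hF]
    simp only
    rw [show x + h n - x = h n by ring, hh]
    simp only
    rw [div_eq_mul_inv, inv_inv, mul_comm]
  -- bound
  have hbound : ∀ n, ∀ x, ‖F n x‖ ≤ (L : ℝ) := by
    intro n x
    have : |G (x + h n) - G x| ≤ (L : ℝ) * h n := by
      have := hG.dist_le_mul (x + h n) x
      simpa [Real.dist_eq, abs_of_nonneg (hpos n).le] using this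
    have hn : (0:ℝ) < (n:ℝ) + 1 := by positivity
    rw [hF]
    simp only [Real.norm_eq_abs, abs_mul, abs_of_nonneg hn.le]
    calc ((n:ℝ)+1) * |G (x + h n) - G x| ≤ ((n:ℝ)+1) * ((L:ℝ) * h n) :=
          mul_le_mul_of_nonneg_left this hn.le
      _ = (L : ℝ) := by simp only [hh]; field_simp
  -- dominated convergence for the interval integral
  have hdct : Tendsto (fun n => ∫ x in a..b, F n x) atTop (𝓝 (∫ x in a..b, deriv G x)) := by
    refine tendsto_integral_filter_of_dominated_convergence
      (bound := fun _ => (L : ℝ))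
      (Eventually.of_forall fun n => (hFc n).aestronglyMeasurable.restrict) ?_ ?_ ?_
    · exact Eventually.of_forall fun n => ae_of_all _ fun x _ => hbound n x
    · exact _root_.intervalIntegrable_const
    · filter_upwards [hconv] with x hx _ using hx
  -- compute the limit of ∫ F n directly
  have hint : ∀ (c d : ℝ), IntervalIntegrable G volume c d := fun c d =>
    hG.continuous.intervalIntegrable c d
  have heval : ∀ n, ∫ x in a..b, F n x
      = (((n:ℝ)+1) * ∫ x in b..(b + h n), G x) - (((n:ℝ)+1) * ∫ x in a..(a + h n), G x) := by
    intro n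
    have e1 : ∫ x in a..b, F n x = ((n:ℝ)+1) * ((∫ x in a..b, G (x + h n)) - ∫ x in a..b, G x) := by
      rw [hF]
      simp only
      rw [intervalIntegral.integral_const_mul, intervalIntegral.integral_sub
        ((show Continuous fun x => G (x + h n) from
          hG.continuous.comp (continuous_add_right _)).intervalIntegrable a b)
        (hint a b)]
    rw [e1, intervalIntegral.integral_comp_add_right]
    have e2 : (∫ x in (a + h n)..(b + h n), G x)
        = (∫ x in (a + h n)..b, G x) + ∫ x in b..(b + h n), G x :=
      (intervalIntegral.integral_add_adjacent_intervals (hint _ _) (hint _ _)).symm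
    have e3 : (∫ x in a..b, G x) = (∫ x in a..(a + h n), G x) + ∫ x in (a + h n)..b, G x :=
      (intervalIntegral.integral_add_adjacent_intervals (hint _ _) (hint _ _)).symm
    rw [e2, e3]
    ring
  have hlim : Tendsto (fun n => ∫ x in a..b, F n x) atTop (𝓝 (G b - G a)) := by
    have := (lip_avg_tendsto hG b).sub (lip_avg_tendsto hG a)
    refine this.congr fun n => (heval n).symm
  exact (tendsto_nhds_unique hlim hdct)

/-- If `g` is Lipschitz on a ball and its derivative (where it exists) is `≤ M` on the ball,
then increments of `g` to the right of the center are controlled by `M`. -/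
lemma incr_le {g : ℝ → ℝ} {r ε : ℝ} {L : NNReal} (hε : 0 < ε)
    (hL : LipschitzOnWith L g (Metric.ball r ε)) {M : ℝ}
    (hM : ∀ s ∈ Metric.ball r ε, DifferentiableAt ℝ g s → deriv g s ≤ M)
    {ρ : ℝ} (hρ1 : r ≤ ρ) (hρ2 : ρ < r + ε) :
    g ρ - g r ≤ M * (ρ - r) := by
  obtain ⟨G, hGlip, hGeq⟩ := hL.extend_real
  have hball : ∀ x : ℝ, r ≤ x → x ≤ ρ → x ∈ Metric.ball r ε := by
    intro x h1 h2
    rw [Metric.mem_ball, Real.dist_eq, abs_of_nonneg (by linarith)]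
    linarith
  have hrb : r ∈ Metric.ball r ε := Metric.mem_ball_self hε
  have hρb : ρ ∈ Metric.ball r ε := hball ρ hρ1 le_rfl
  have hftc : G ρ - G r = ∫ x in r..ρ, deriv G x := lip_ftc hGlip hρ1
  have hbd : ∀ᵐ x, x ∈ Set.uIoc r ρ → deriv G x ≤ M := by
    filter_upwards [hGlip.ae_differentiableAt (μ := volume)] with x hx hmem
    rw [Set.uIoc_of_le hρ1] at hmem
    have hxball : x ∈ Metric.ball r ε := hball x hmem.1.le hmem.2
    have heq : G =ᶠ[nhds x] g :=
      Filter.eventuallyEq_of_mem (Metric.isOpen_ball.mem_nhds hxball) hGeq.symm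
    have h1 : deriv G x = deriv g x := heq.deriv_eq
    have h2 : DifferentiableAt ℝ g x := (heq.differentiableAt_iff).mp hx
    rw [h1]
    exact hM x hxball h2
  have hmono : (∫ x in r..ρ, deriv G x) ≤ ∫ x in r..ρ, M := by
    apply intervalIntegral.integral_mono_ae_restrict hρ1
      (lip_integrable_deriv hGlip r ρ) _root_.intervalIntegrable_const
    rw [Filter.EventuallyLE, ae_restrict_iff' measurableSet_Icc]
    have hne : ∀ᵐ x : ℝ, x ≠ r := by
      rw [ae_iff]
      simpa using measure_singleton (r : ℝ)
    filter_upwards [hbd, hne] with x hx hxr hmem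
    exact hx (by
      rw [Set.uIoc_of_le hρ1]
      exact ⟨lt_of_le_of_ne hmem.1 (Ne.symm hxr), hmem.2⟩)
  have : G ρ - G r ≤ M * (ρ - r) := by
    rw [hftc]
    calc (∫ x in r..ρ, deriv G x) ≤ ∫ x in r..ρ, M := hmono
      _ = M * (ρ - r) := by simp [smul_eq_mul, mul_comm]
  rwa [← hGeq hρb, ← hGeq hrb] at this

lemma contDiff_one_of_two {ψ : ℝ → ℝ} (hψ : ContDiff ℝ 2 ψ) : ContDiff ℝ 1 (deriv ψ) := by
  have h2 : ContDiff ℝ ((1 + 1 : ℕ) : WithTop ℕ∞) ψ := by exact_mod_cast hψ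
  have := ContDiff.iterate_deriv' 1 1 h2
  simpa using this

lemma touch_second_deriv_le {u0 ψ : ℝ → ℝ} {r ε M : ℝ} (hε : 0 < ε)
    (hu0 : ∀ s ∈ Metric.ball r ε, DifferentiableAt ℝ u0 s)
    (hgc : ContinuousOn (deriv u0) (Metric.ball r ε))
    (hincr : ∀ ρ, r ≤ ρ → ρ < r + ε → deriv u0 ρ - deriv u0 r ≤ M * (ρ - r))
    (hψ : ContDiff ℝ 2 ψ)
    (hmin : IsLocalMin (fun ρ => u0 ρ - ψ ρ) r) :
    deriv ψ r = deriv u0 r ∧ deriv (deriv ψ) r ≤ M := by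
  have hrball : r ∈ Metric.ball r ε := Metric.mem_ball_self hε
  have hψd : Differentiable ℝ ψ := hψ.differentiable (by norm_num)
  have hψ1 : ContDiff ℝ 1 (deriv ψ) := contDiff_one_of_two hψ
  have hψ'd : Differentiable ℝ (deriv ψ) := hψ1.differentiable (by norm_num)
  have hψ'' : Continuous (deriv (deriv ψ)) := hψ1.continuous_deriv le_rfl
  -- first derivative match
  have heq : deriv ψ r = deriv u0 r := by
    have h0 : deriv (fun ρ => u0 ρ - ψ ρ) r = 0 := hmin.deriv_eq_zero
    rw [deriv_fun_sub (hu0 r hrball) (hψd r)] at h0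
    linarith
  refine ⟨heq, le_of_forall_pos_le_add fun ε' hε' => ?_⟩
  set Y := deriv (deriv ψ) r with hY
  set q := deriv u0 r with hq
  -- continuity of ψ'' at r
  obtain ⟨δ1, hδ1, hδ1p⟩ := Metric.continuousAt_iff.mp hψ''.continuousAt ε' hε'
  -- local minimality radius
  have hminev : ∀ᶠ ρ in 𝓝 r, (fun ρ => u0 ρ - ψ ρ) r ≤ (fun ρ => u0 ρ - ψ ρ) ρ := hmin
  obtain ⟨δ2, hδ2, hδ2p⟩ := Metric.eventually_nhds_iff.mp hminev
  set d := min δ1 (min δ2 ε) / 2 with hd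
  have hdpos : 0 < d := by positivity
  have hdδ1 : d < δ1 := by
    have h1 := min_le_left δ1 (min δ2 ε); rw [hd]; linarith
  have hdδ2 : d < δ2 := by
    have h1 := (min_le_right δ1 (min δ2 ε)).trans (min_le_left δ2 ε); rw [hd]; linarith
  have hdε : d < ε := by
    have h1 := (min_le_right δ1 (min δ2 ε)).trans (min_le_right δ2 ε); rw [hd]; linarith
  set ρ := r + d with hρ
  have hrρ : r ≤ ρ := by rw [hρ]; linarith
  have hsub : Set.uIcc r ρ ⊆ Metric.ball r ε := by
    rw [Set.uIcc_of_le hrρ]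
    intro s hs
    rw [Metric.mem_ball, Real.dist_eq, abs_of_nonneg (by linarith [hs.1])]
    have := hs.2; rw [hρ] at this; linarith
  -- FTC for u0 on [r, ρ]
  have hgint : IntervalIntegrable (deriv u0) volume r ρ :=
    (hgc.mono hsub).intervalIntegrable
  have hu0ftc : (∫ s in r..ρ, deriv u0 s) = u0 ρ - u0 r :=
    intervalIntegral.integral_deriv_eq_sub (fun x hx => hu0 x (hsub hx)) hgint
  -- the comparison quadratic
  have hPder : ∀ C A : ℝ, ∀ s ∈ Set.uIcc r ρ,
      HasDerivAt (fun s => C * s + A * (s - r) ^ 2 / 2) (C + A * (s - r)) s := by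
    intro C A s _
    have h1 : HasDerivAt (fun s : ℝ => C * s) C s := by
      simpa using (hasDerivAt_id s).const_mul C
    have h2 : HasDerivAt (fun s : ℝ => A * (s - r) ^ 2 / 2) (A * (s - r)) s := by
      have hs : HasDerivAt (fun s : ℝ => s - r) 1 s := (hasDerivAt_id s).sub_const r
      have h3 := ((hs.fun_pow 2).const_mul A).div_const 2
      refine h3.congr_deriv ?_
      push_cast
      ring
    simpa using h1.fun_add h2
  have hcontP : ∀ C A : ℝ, Continuous fun s : ℝ => C + A * (s - r) := fun C A =>
    continuous_const.add (continuous_const.mul (continuous_id.sub continuous_const))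
  have hPint : ∀ C A : ℝ, (∫ s in r..ρ, (C + A * (s - r))) =
      C * (ρ - r) + A * (ρ - r) ^ 2 / 2 := by
    intro C A
    rw [intervalIntegral.integral_eq_sub_of_hasDerivAt (hPder C A)
      ((hcontP C A).intervalIntegrable _ _)]
    ring
  -- upper bound for u0 increment
  have hu0le : u0 ρ - u0 r ≤ q * (ρ - r) + M * (ρ - r) ^ 2 / 2 := by
    rw [← hu0ftc, ← hPint q M]
    apply intervalIntegral.integral_mono_on hrρ hgint
      ((hcontP q M).intervalIntegrable _ _)
    intro s hs
    have h := hincr s hs.1 (by have := hs.2; rw [hρ] at this; linarith)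
    linarith
  -- lower bound for ψ increment
  have hψ'lb : ∀ s ∈ Set.Icc r ρ, deriv ψ r + (Y - ε') * (s - r) ≤ deriv ψ s := by
    intro s hs
    have hftc : (∫ t in r..s, deriv (deriv ψ) t) = deriv ψ s - deriv ψ r :=
      intervalIntegral.integral_deriv_eq_sub (fun t _ => hψ'd t)
        (hψ''.continuousOn.intervalIntegrable)
    have hmono : (∫ t in r..s, (Y - ε')) ≤ ∫ t in r..s, deriv (deriv ψ) t := by
      apply intervalIntegral.integral_mono_on hs.1
        _root_.intervalIntegrable_const
        (hψ''.continuousOn.intervalIntegrable)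
      intro t ht
      have htd : dist t r < δ1 := by
        rw [Real.dist_eq, abs_of_nonneg (by linarith [ht.1])]
        have h1 := ht.2
        have h2 := hs.2
        rw [hρ] at h2
        linarith
      have := hδ1p htd
      rw [Real.dist_eq] at this
      have habs := abs_lt.mp this
      rw [hY]; linarith [habs.1]
    rw [hftc] at hmono
    simp only [intervalIntegral.integral_const, smul_eq_mul] at hmono
    linarith [hmono]
  have hψle : deriv ψ r * (ρ - r) + (Y - ε') * (ρ - r) ^ 2 / 2 ≤ ψ ρ - ψ r := by
    have hftc : (∫ s in r..ρ, deriv ψ s) = ψ ρ - ψ r :=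
      intervalIntegral.integral_deriv_eq_sub (fun t _ => hψd t)
        ((hψ1.continuous).continuousOn.intervalIntegrable)
    rw [← hftc, ← hPint (deriv ψ r) (Y - ε')]
    apply intervalIntegral.integral_mono_on hrρ
      ((hcontP (deriv ψ r) (Y - ε')).intervalIntegrable _ _)
      ((hψ1.continuous).continuousOn.intervalIntegrable)
    intro s hs
    have := hψ'lb s hs
    linarith
  -- local minimality at ρ
  have hminρ : u0 r - ψ r ≤ u0 ρ - ψ ρ := by
    apply hδ2p
    rw [Real.dist_eq, hρ]
    rw [abs_of_nonneg (by linarith)]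
    simpa using hdδ2
  have hρr : ρ - r = d := by rw [hρ]; ring
  have hd2 : 0 < d ^ 2 := by positivity
  rw [heq] at hψle
  nlinarith [hψle, hu0le, hminρ, hd2]

section Algebra

lemma Fbar_mono {c r q : ℝ} (hr : 0 < r) {Y M : ℝ} (h : Y ≤ M) :
    Fbar c r q Y ≤ Fbar c r q M := by
  unfold Fbar
  have hW : (0:ℝ) < 1 + r ^ 2 * q ^ 2 := by positivity
  have h3 : r * Y / (1 + r ^ 2 * q ^ 2) ≤ r * M / (1 + r ^ 2 * q ^ 2) := by
    gcongr
  linarith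

lemma Fbar_eval {c r q B : ℝ} (hr : 0 < r) :
    Fbar c r q ((B * (1 + (r * q) ^ 2) ^ ((3:ℝ)/2) - q * (2 + (r * q) ^ 2)) / r)
      = (c + B) * Real.sqrt (1 + r ^ 2 * q ^ 2) := by
  have hW : (0:ℝ) < 1 + r ^ 2 * q ^ 2 := by positivity
  have hrq : (r * q) ^ 2 = r ^ 2 * q ^ 2 := by ring
  have hP : (1 + r ^ 2 * q ^ 2) ^ ((3:ℝ)/2)
      = (1 + r ^ 2 * q ^ 2) * Real.sqrt (1 + r ^ 2 * q ^ 2) := by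
    rw [Real.sqrt_eq_rpow, ← Real.rpow_one_add' (by positivity) (by norm_num)]
    norm_num
  rw [Fbar, hrq, hP]
  field_simp
  ring

lemma deriv2_le_of_kappa_le {u0 : ℝ → ℝ} {s B : ℝ} (hs : 0 < s) (h : kappa u0 s ≤ B) :
    deriv (deriv u0) s ≤
      (B * (1 + (s * deriv u0 s) ^ 2) ^ ((3:ℝ)/2) - deriv u0 s * (2 + (s * deriv u0 s) ^ 2)) / s := by
  set g := deriv u0 s
  set dd := deriv (deriv u0) s
  set x2 := (s * g) ^ 2 with hx2
  have hx2nn : 0 ≤ x2 := sq_nonneg _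
  have hPpos : (0:ℝ) < (1 + x2) ^ ((3:ℝ)/2) := Real.rpow_pos_of_pos (by positivity) _
  have hk : (g * (2 + x2) + s * dd) / ((1 + x2) ^ ((3:ℝ)/2)) ≤ B := by
    have : kappa u0 s = (g * (2 + x2) + s * dd) / ((1 + x2) ^ ((3:ℝ)/2)) := by
      rw [kappa]
      simp only [hx2, g, dd]
      ring
    linarith [this ▸ h]
  rw [div_le_iff₀ hPpos] at hk
  rw [le_div_iff₀ hs]
  nlinarith [hk]

lemma sqrtW_le {r q L0 : ℝ} (hr : 0 ≤ r) (hq : |q| ≤ L0) :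
    Real.sqrt (1 + r ^ 2 * q ^ 2) ≤ 1 + r * L0 := by
  have hL0 : 0 ≤ L0 := (abs_nonneg q).trans hq
  have h1 : 1 + r ^ 2 * q ^ 2 ≤ (1 + r * L0) ^ 2 := by
    have hq2 : q ^ 2 ≤ L0 ^ 2 := by
      have := sq_abs q ▸ pow_le_pow_left₀ (abs_nonneg q) hq 2
      simpa [sq_abs] using this
    nlinarith [mul_nonneg hr hL0, sq_nonneg r]
  calc Real.sqrt (1 + r ^ 2 * q ^ 2) ≤ Real.sqrt ((1 + r * L0) ^ 2) := Real.sqrt_le_sqrt h1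
    _ = 1 + r * L0 := Real.sqrt_sq (by positivity)

lemma Fbar_le_caseA {c r q Y L L0 : ℝ} (hr : 0 < r) (hq : |q| ≤ L0) (hY : Y ≤ L) (hL : 0 ≤ L) :
    Fbar c r q Y ≤ |c| * (1 + r * L0) + 2 * L0 + r * L := by
  have hL0 : 0 ≤ L0 := (abs_nonneg q).trans hq
  have hW : (0:ℝ) < 1 + r ^ 2 * q ^ 2 := by positivity
  have hW1 : (1:ℝ) ≤ 1 + r ^ 2 * q ^ 2 := by nlinarith [sq_nonneg (r*q)]
  have hsq := sqrtW_le hr.le hq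
  have hsqnn : 0 ≤ Real.sqrt (1 + r ^ 2 * q ^ 2) := Real.sqrt_nonneg _
  have t1 : c * Real.sqrt (1 + r ^ 2 * q ^ 2) ≤ |c| * (1 + r * L0) := by
    calc c * Real.sqrt (1 + r ^ 2 * q ^ 2) ≤ |c| * Real.sqrt (1 + r ^ 2 * q ^ 2) :=
          mul_le_mul_of_nonneg_right (le_abs_self c) hsqnn
      _ ≤ |c| * (1 + r * L0) := mul_le_mul_of_nonneg_left hsq (abs_nonneg c)
  have t2 : q * ((2 + r ^ 2 * q ^ 2) / (1 + r ^ 2 * q ^ 2)) ≤ 2 * L0 := by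
    have h2 : (2 + r ^ 2 * q ^ 2) / (1 + r ^ 2 * q ^ 2) ≤ 2 := by
      rw [div_le_iff₀ hW]; nlinarith [sq_nonneg (r*q)]
    have h0 : 0 ≤ (2 + r ^ 2 * q ^ 2) / (1 + r ^ 2 * q ^ 2) := by positivity
    calc q * ((2 + r ^ 2 * q ^ 2) / (1 + r ^ 2 * q ^ 2))
        ≤ |q| * ((2 + r ^ 2 * q ^ 2) / (1 + r ^ 2 * q ^ 2)) :=
          mul_le_mul_of_nonneg_right (le_abs_self q) h0
      _ ≤ L0 * 2 := mul_le_mul hq h2 h0 hL0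
      _ = 2 * L0 := by ring
  have t3 : r * Y / (1 + r ^ 2 * q ^ 2) ≤ r * L := by
    calc r * Y / (1 + r ^ 2 * q ^ 2) ≤ r * L / (1 + r ^ 2 * q ^ 2) := by
          gcongr
      _ ≤ r * L := by
          rw [div_le_iff₀ hW]
          nlinarith [mul_nonneg hr.le hL, sq_nonneg (r*q)]
  unfold Fbar
  linarith

lemma Fbar_neg {c r q Y : ℝ} : Fbar (-c) r (-q) (-Y) = -Fbar c r q Y := by
  unfold Fbar
  have h1 : (-q) ^ 2 = q ^ 2 := by ring
  rw [h1]
  ring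

end Algebra


section Key

lemma touch_le_of_bound {u0 ψ : ℝ → ℝ} {r ε : ℝ} {L : NNReal} (hε : 0 < ε)
    (hu0 : ∀ s ∈ Metric.ball r ε, DifferentiableAt ℝ u0 s)
    (hL : LipschitzOnWith L (deriv u0) (Metric.ball r ε))
    {h : ℝ → ℝ} (hcont : ContinuousAt h r)
    (hpt : ∀ s ∈ Metric.ball r ε, DifferentiableAt ℝ (deriv u0) s → deriv (deriv u0) s ≤ h s)
    (hψ : ContDiff ℝ 2 ψ) (hmin : IsLocalMin (fun ρ => u0 ρ - ψ ρ) r) :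
    deriv ψ r = deriv u0 r ∧ deriv (deriv ψ) r ≤ h r := by
  have key : ∀ ε' : ℝ, 0 < ε' →
      deriv ψ r = deriv u0 r ∧ deriv (deriv ψ) r ≤ h r + ε' := by
    intro ε' hε'
    obtain ⟨δ, hδ, hδp⟩ := Metric.continuousAt_iff.mp hcont ε' hε'
    set ε2 := min ε δ with hε2def
    have hε2 : 0 < ε2 := lt_min hε hδ
    have hsub : Metric.ball r ε2 ⊆ Metric.ball r ε :=
      Metric.ball_subset_ball (min_le_left _ _)
    have hL2 : LipschitzOnWith L (deriv u0) (Metric.ball r ε2) := hL.mono hsub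
    have hM : ∀ s ∈ Metric.ball r ε2, DifferentiableAt ℝ (deriv u0) s →
        deriv (deriv u0) s ≤ h r + ε' := by
      intro s hs hd
      have h1 := hpt s (hsub hs) hd
      have h2 : dist s r < δ := lt_of_lt_of_le (Metric.mem_ball.mp hs) (min_le_right _ _)
      have h3 := hδp h2
      rw [Real.dist_eq] at h3
      have := (abs_lt.mp h3).2
      linarith
    have hincr : ∀ ρ, r ≤ ρ → ρ < r + ε2 →
        deriv u0 ρ - deriv u0 r ≤ (h r + ε') * (ρ - r) :=
      fun ρ h1 h2 => incr_le hε2 hL2 hM h1 h2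
    exact touch_second_deriv_le hε2 (fun s hs => hu0 s (hsub hs))
      (hL2.continuousOn) hincr hψ hmin
  obtain ⟨heq, _⟩ := key 1 one_pos
  refine ⟨heq, le_of_forall_pos_le_add fun ε' hε' => (key ε' hε').2⟩

/-- The continuous right-hand side used in the compatibility/curvature bounds. -/
noncomputable def hbar (u0 : ℝ → ℝ) (B : ℝ → ℝ) (s : ℝ) : ℝ :=
  (B s * (1 + (s * deriv u0 s) ^ 2) ^ ((3:ℝ)/2) - deriv u0 s * (2 + (s * deriv u0 s) ^ 2)) / s

lemma hbar_continuousAt {u0 : ℝ → ℝ} {B : ℝ → ℝ} {r : ℝ} (hr : 0 < r)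
    (hg : ContinuousAt (deriv u0) r) (hB : ContinuousAt B r) :
    ContinuousAt (hbar u0 B) r := by
  unfold hbar
  have hx : ContinuousAt (fun s => (s * deriv u0 s) ^ 2) r := (continuousAt_id.mul hg).pow 2
  have hbase : ContinuousAt (fun s => 1 + (s * deriv u0 s) ^ 2) r := continuousAt_const.add hx
  have hpow : ContinuousAt (fun s => (1 + (s * deriv u0 s) ^ 2) ^ ((3:ℝ)/2)) r :=
    hbase.rpow_const (Or.inr (by norm_num))
  exact (((hB.mul hpow).sub (hg.mul (continuousAt_const.add hx))).div continuousAt_id hr.ne')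

lemma key_est (c : ℝ) (u0 : ℝ → ℝ) (hW : W2Loc u0)
    (hlip : ∃ L : NNReal, LipschitzOnWith L u0 (Set.Ioi 0))
    (hreg : DerivW1inf u0 ∨ ∃ K : ℝ, KappaBdd u0 K)
    (hcompat : ∃ C r0 : ℝ, 0 < C ∧ 0 < r0 ∧ Compat c u0 C r0) :
    ∃ Cb : ℝ, 0 < Cb ∧ ∀ r : ℝ, 0 < r → ∀ ψ : ℝ → ℝ, ContDiff ℝ 2 ψ →
      IsLocalMin (fun ρ => u0 ρ - ψ ρ) r →
      Fbar c r (deriv ψ r) (deriv (deriv ψ) r) ≤ Cb * r := by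
  obtain ⟨L1, hL1⟩ := hlip
  set L0 : ℝ := (L1 : ℝ) with hL0def
  have hL0 : 0 ≤ L0 := NNReal.coe_nonneg L1
  have hqb : ∀ r : ℝ, 0 < r → |deriv u0 r| ≤ L0 := by
    intro r hr
    have := norm_deriv_le_of_lipschitzOn (Ioi_mem_nhds hr) hL1
    simpa [Real.norm_eq_abs] using this
  obtain ⟨C, r0, hC, hr0, hcomp⟩ := hcompat
  -- the constant covering the region r ≥ r0, together with the a.e. bound it comes from
  -- handle both regularity regimes uniformly later; first the generic small-r machinery
  have main_small : ∀ r : ℝ, 0 < r → r < r0 → ∀ ψ : ℝ → ℝ, ContDiff ℝ 2 ψ →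
      IsLocalMin (fun ρ => u0 ρ - ψ ρ) r →
      Fbar c r (deriv ψ r) (deriv (deriv ψ) r) ≤ (C * (1 + r0 * L0)) * r := by
    intro r hr hrr0 ψ hψ hmin
    obtain ⟨ε, hε, L, hLip⟩ := hW.2 r hr
    set ε2 := min ε (min (r0 - r) r) with hε2def
    have hε2 : 0 < ε2 := lt_min hε (lt_min (by linarith) hr)
    have hball_pos : ∀ s ∈ Metric.ball r ε2, 0 < s ∧ s ≤ r0 := by
      intro s hs
      rw [Metric.mem_ball, Real.dist_eq, abs_lt] at hs
      have h1 : ε2 ≤ r0 - r := (min_le_right _ _).trans (min_le_left _ _)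
      have h2 : ε2 ≤ r := (min_le_right _ _).trans (min_le_right _ _)
      constructor <;> [linarith [hs.1]; linarith [hs.2]]
    have hsubball : Metric.ball r ε2 ⊆ Metric.ball r ε :=
      Metric.ball_subset_ball (min_le_left _ _)
    have hu0d : ∀ s ∈ Metric.ball r ε2, DifferentiableAt ℝ u0 s :=
      fun s hs => hW.1 s (hball_pos s hs).1
    have hL2 : LipschitzOnWith L (deriv u0) (Metric.ball r ε2) := hLip.mono hsubball
    have hgc : ContinuousAt (deriv u0) r :=
      (hL2.continuousOn).continuousAt (Metric.ball_mem_nhds r hε2)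
    have hpt : ∀ s ∈ Metric.ball r ε2, DifferentiableAt ℝ (deriv u0) s →
        deriv (deriv u0) s ≤ hbar u0 (fun s => C * s - c) s := by
      intro s hs hd
      obtain ⟨hs0, hsr0⟩ := hball_pos s hs
      have := hcomp s hs0 hsr0 hd
      have hk : kappa u0 s ≤ C * s - c := by
        have := (abs_le.mp this).2
        linarith
      exact deriv2_le_of_kappa_le hs0 hk
    have hBc : ContinuousAt (fun s => C * s - c) r :=
      (continuousAt_const.mul continuousAt_id).sub continuousAt_const
    obtain ⟨heq, hY⟩ := touch_le_of_bound hε2 hu0d hL2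
      (hbar_continuousAt hr hgc hBc) hpt hψ hmin
    set q := deriv u0 r with hqdef
    rw [heq]
    have hmono := Fbar_mono (c := c) (q := q) hr hY
    have heval : Fbar c r q (hbar u0 (fun s => C * s - c) r)
        = (C * r) * Real.sqrt (1 + r ^ 2 * q ^ 2) := by
      have h := Fbar_eval (c := c) (r := r) (B := C * r - c) (q := q) hr
      simp only [hbar]
      rw [h]
      ring
    have hsqle : Real.sqrt (1 + r ^ 2 * q ^ 2) ≤ 1 + r * L0 := sqrtW_le hr.le (hqb r hr)
    have hfinal : (C * r) * Real.sqrt (1 + r ^ 2 * q ^ 2) ≤ (C * (1 + r0 * L0)) * r := by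
      have h1 : (C * r) * Real.sqrt (1 + r ^ 2 * q ^ 2) ≤ (C * r) * (1 + r * L0) :=
        mul_le_mul_of_nonneg_left hsqle (by positivity)
      have h2 : (C * r) * (1 + r * L0) ≤ (C * (1 + r0 * L0)) * r := by
        have h3 : r * L0 ≤ r0 * L0 := mul_le_mul_of_nonneg_right hrr0.le hL0
        have h4 : (C * r) * (r * L0) ≤ (C * r) * (r0 * L0) :=
          mul_le_mul_of_nonneg_left h3 (by positivity)
        nlinarith [h4]
      linarith
    calc Fbar c r q (deriv (deriv ψ) r) ≤ Fbar c r q (hbar u0 (fun s => C * s - c) r) := hmono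
      _ = (C * r) * Real.sqrt (1 + r ^ 2 * q ^ 2) := heval
      _ ≤ (C * (1 + r0 * L0)) * r := hfinal
  rcases hreg with ⟨⟨M0, hM0⟩, Lg, hLg⟩ | ⟨K, hK⟩
  · -- (ū₀)_r ∈ W^{1,∞}
    refine ⟨C * (1 + r0 * L0) + (|c| / r0 + |c| * L0 + 2 * L0 / r0 + (Lg : ℝ)) + 1,
      by positivity, ?_⟩
    intro r hr ψ hψ hmin
    rcases lt_or_ge r r0 with hcase | hcase
    · have h := main_small r hr hcase ψ hψ hmin
      have hnn : 0 ≤ ((|c| / r0 + |c| * L0 + 2 * L0 / r0 + (Lg : ℝ)) + 1) * r := by positivity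
      nlinarith [h, hnn]
    · obtain ⟨ε, hε, L, hLip⟩ := hW.2 r hr
      set ε2 := min ε r with hε2def
      have hε2 : 0 < ε2 := lt_min hε hr
      have hsubball : Metric.ball r ε2 ⊆ Metric.ball r ε :=
        Metric.ball_subset_ball (min_le_left _ _)
      have hball_pos : ∀ s ∈ Metric.ball r ε2, 0 < s := by
        intro s hs
        rw [Metric.mem_ball, Real.dist_eq, abs_lt] at hs
        have h2 : ε2 ≤ r := min_le_right _ _
        linarith [hs.1]
      have hu0d : ∀ s ∈ Metric.ball r ε2, DifferentiableAt ℝ u0 s :=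
        fun s hs => hW.1 s (hball_pos s hs)
      have hL2 : LipschitzOnWith L (deriv u0) (Metric.ball r ε2) := hLip.mono hsubball
      have hpt : ∀ s ∈ Metric.ball r ε2, DifferentiableAt ℝ (deriv u0) s →
          deriv (deriv u0) s ≤ (fun _ : ℝ => (Lg : ℝ)) s := by
        intro s hs _
        have := norm_deriv_le_of_lipschitzOn (Ioi_mem_nhds (hball_pos s hs)) hLg
        rw [Real.norm_eq_abs] at this
        exact (le_abs_self _).trans this
      obtain ⟨heq, hY⟩ := touch_le_of_bound hε2 hu0d hL2 continuousAt_const hpt hψ hmin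
      rw [heq]
      have hb := Fbar_le_caseA (c := c) hr (hqb r hr) hY (NNReal.coe_nonneg Lg)
      have hc1 : |c| ≤ |c| / r0 * r := by
        have e1 : |c| / r0 * r0 = |c| := div_mul_cancel₀ _ hr0.ne'
        have e2 : |c| / r0 * r0 ≤ |c| / r0 * r :=
          mul_le_mul_of_nonneg_left hcase (by positivity)
        linarith
      have hc2 : 2 * L0 ≤ 2 * L0 / r0 * r := by
        have e1 : 2 * L0 / r0 * r0 = 2 * L0 := div_mul_cancel₀ _ hr0.ne'
        have e2 : 2 * L0 / r0 * r0 ≤ 2 * L0 / r0 * r :=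
          mul_le_mul_of_nonneg_left hcase (by positivity)
        linarith
      have hnn : 0 ≤ (C * (1 + r0 * L0) + 1) * r := by positivity
      nlinarith [hb, hc1, hc2, hnn]
  · -- bounded curvature case
    refine ⟨C * (1 + r0 * L0) + (|c| + |K|) * (1 / r0 + L0) + 1, by positivity, ?_⟩
    intro r hr ψ hψ hmin
    rcases lt_or_ge r r0 with hcase | hcase
    · have h := main_small r hr hcase ψ hψ hmin
      have hnn : 0 ≤ ((|c| + |K|) * (1 / r0 + L0) + 1) * r := by positivity
      nlinarith [h, hnn]
    · obtain ⟨ε, hε, L, hLip⟩ := hW.2 r hr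
      set ε2 := min ε r with hε2def
      have hε2 : 0 < ε2 := lt_min hε hr
      have hsubball : Metric.ball r ε2 ⊆ Metric.ball r ε :=
        Metric.ball_subset_ball (min_le_left _ _)
      have hball_pos : ∀ s ∈ Metric.ball r ε2, 0 < s := by
        intro s hs
        rw [Metric.mem_ball, Real.dist_eq, abs_lt] at hs
        have h2 : ε2 ≤ r := min_le_right _ _
        linarith [hs.1]
      have hu0d : ∀ s ∈ Metric.ball r ε2, DifferentiableAt ℝ u0 s :=
        fun s hs => hW.1 s (hball_pos s hs)
      have hL2 : LipschitzOnWith L (deriv u0) (Metric.ball r ε2) := hLip.mono hsubball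
      have hgc : ContinuousAt (deriv u0) r :=
        (hL2.continuousOn).continuousAt (Metric.ball_mem_nhds r hε2)
      have hpt : ∀ s ∈ Metric.ball r ε2, DifferentiableAt ℝ (deriv u0) s →
          deriv (deriv u0) s ≤ hbar u0 (fun _ => K) s := by
        intro s hs hd
        have h1 := hK s (hball_pos s hs) hd
        exact deriv2_le_of_kappa_le (hball_pos s hs) ((le_abs_self _).trans h1)
      obtain ⟨heq, hY⟩ := touch_le_of_bound hε2 hu0d hL2
        (hbar_continuousAt hr hgc continuousAt_const) hpt hψ hmin
      set q := deriv u0 r with hqdef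
      rw [heq]
      have hmono := Fbar_mono (c := c) (q := q) hr hY
      have heval : Fbar c r q (hbar u0 (fun _ => K) r)
          = (c + K) * Real.sqrt (1 + r ^ 2 * q ^ 2) := by
        have h := Fbar_eval (c := c) (r := r) (B := K) (q := q) hr
        simp only [hbar]
        rw [h]
      have hsqle : Real.sqrt (1 + r ^ 2 * q ^ 2) ≤ 1 + r * L0 := sqrtW_le hr.le (hqb r hr)
      have hsqnn : 0 ≤ Real.sqrt (1 + r ^ 2 * q ^ 2) := Real.sqrt_nonneg _
      have s2 : (c + K) * Real.sqrt (1 + r ^ 2 * q ^ 2)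
          ≤ (|c| + |K|) * Real.sqrt (1 + r ^ 2 * q ^ 2) := by
        apply mul_le_mul_of_nonneg_right _ hsqnn
        calc c + K ≤ |c| + K := by linarith [le_abs_self c]
          _ ≤ |c| + |K| := by linarith [le_abs_self K]
      have s3 : (|c| + |K|) * Real.sqrt (1 + r ^ 2 * q ^ 2) ≤ (|c| + |K|) * (1 + r * L0) :=
        mul_le_mul_of_nonneg_left hsqle (by positivity)
      have s4 : 1 + r * L0 ≤ (1 / r0 + L0) * r := by
        have e1 : 1 / r0 * r0 = 1 := div_mul_cancel₀ _ hr0.ne'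
        have e2 : 1 / r0 * r0 ≤ 1 / r0 * r := mul_le_mul_of_nonneg_left hcase (by positivity)
        nlinarith
      have s5 : (|c| + |K|) * (1 + r * L0) ≤ (|c| + |K|) * ((1 / r0 + L0) * r) :=
        mul_le_mul_of_nonneg_left s4 (by positivity)
      have hnn : 0 ≤ (C * (1 + r0 * L0) + 1) * r := by positivity
      nlinarith [hmono, heval, s2, s3, s5, hnn]

end Key


section Neg

lemma deriv_neg_fun (f : ℝ → ℝ) : deriv (fun x => -f x) = fun x => -deriv f x :=
  funext fun _ => deriv.neg

lemma deriv2_neg_fun (f : ℝ → ℝ) :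
    deriv (deriv (fun x => -f x)) = fun x => -deriv (deriv f) x := by
  rw [deriv_neg_fun]
  exact funext fun _ => deriv.neg

lemma diff2_neg_iff {f : ℝ → ℝ} {x : ℝ} :
    DifferentiableAt ℝ (deriv (fun y => -f y)) x ↔ DifferentiableAt ℝ (deriv f) x := by
  rw [deriv_neg_fun]
  constructor
  · intro h; simpa using h.neg
  · intro h; exact h.neg

lemma lipschitzOnWith_neg {f : ℝ → ℝ} {L : NNReal} {s : Set ℝ} (h : LipschitzOnWith L f s) :
    LipschitzOnWith L (fun x => -f x) s := by
  intro x hx y hy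
  simpa [edist_neg_neg] using h hx hy

lemma W2Loc_neg {u0 : ℝ → ℝ} (h : W2Loc u0) : W2Loc (fun x => -u0 x) := by
  refine ⟨fun r hr => (h.1 r hr).neg, fun r hr => ?_⟩
  obtain ⟨ε, hε, L, hL⟩ := h.2 r hr
  exact ⟨ε, hε, L, by rw [deriv_neg_fun]; exact lipschitzOnWith_neg hL⟩

lemma kappa_neg {u0 : ℝ → ℝ} (r : ℝ) : kappa (fun x => -u0 x) r = -kappa u0 r := by
  unfold kappa
  rw [deriv_neg_fun]
  simp only
  rw [show deriv (fun x => -deriv u0 x) r = -deriv (deriv u0) r from deriv.neg,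
    show (r * -deriv u0 r) ^ 2 = (r * deriv u0 r) ^ 2 by ring]
  ring

lemma compat_neg {c : ℝ} {u0 : ℝ → ℝ} {C r0 : ℝ} (h : Compat c u0 C r0) :
    Compat (-c) (fun x => -u0 x) C r0 := by
  intro r hr hrr0 hd
  rw [kappa_neg, show -c + -kappa u0 r = -(c + kappa u0 r) by ring, abs_neg]
  exact h r hr hrr0 (diff2_neg_iff.mp hd)

lemma reg_neg {u0 : ℝ → ℝ} (h : DerivW1inf u0 ∨ ∃ K, KappaBdd u0 K) :
    DerivW1inf (fun x => -u0 x) ∨ ∃ K, KappaBdd (fun x => -u0 x) K := by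
  rcases h with ⟨⟨M, hM⟩, L, hL⟩ | ⟨K, hK⟩
  · exact Or.inl ⟨⟨M, fun r hr => by rw [deriv_neg_fun]; simpa using hM r hr⟩,
      L, by rw [deriv_neg_fun]; exact lipschitzOnWith_neg hL⟩
  · exact Or.inr ⟨K, fun r hr hd => by
      rw [kappa_neg, abs_neg]; exact hK r hr (diff2_neg_iff.mp hd)⟩

lemma lip_neg {u0 : ℝ → ℝ} (h : ∃ L : NNReal, LipschitzOnWith L u0 (Set.Ioi 0)) :
    ∃ L : NNReal, LipschitzOnWith L (fun x => -u0 x) (Set.Ioi 0) := by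
  obtain ⟨L, hL⟩ := h
  exact ⟨L, lipschitzOnWith_neg hL⟩

end Neg

/-- Proposition 5.1: barriers for the Cauchy problem.
Under the regularity hypotheses and the compatibility condition on `ū₀`, there is `C̄ > 0`
such that `ū₀(r) + C̄ t` is a viscosity super-solution and `ū₀(r) − C̄ t` a viscosity
sub-solution of (E) with initial datum `ū₀`. -/
theorem barriers_with_compatibility (c : ℝ) (u0 : ℝ → ℝ)
    (hW : W2Loc u0)
    (hlip : ∃ L : NNReal, LipschitzOnWith L u0 (Set.Ioi 0))
    (hreg : DerivW1inf u0 ∨ ∃ K : ℝ, KappaBdd u0 K)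
    (hcompat : ∃ C r0 : ℝ, 0 < C ∧ 0 < r0 ∧ Compat c u0 C r0) :
    ∃ Cb : ℝ, 0 < Cb ∧
      IsSuperSol c ⊤ u0 (fun t r => u0 r + Cb * t) ∧
      IsSubSol c ⊤ u0 (fun t r => u0 r - Cb * t) := by
  obtain ⟨Cb1, hCb1, hest1⟩ := key_est c u0 hW hlip hreg hcompat
  obtain ⟨C2, r02, hC2, hr02, hcomp2⟩ := hcompat
  obtain ⟨Cb2, hCb2, hest2⟩ := key_est (-c) (fun x => -u0 x) (W2Loc_neg hW) (lip_neg hlip)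
    (reg_neg hreg) ⟨C2, r02, hC2, hr02, compat_neg hcomp2⟩
  set Cb := max Cb1 Cb2 with hCbdef
  have hCb : 0 < Cb := lt_max_of_lt_left hCb1
  have hu0c : ContinuousOn u0 (Set.Ioi 0) :=
    fun x hx => (hW.1 x hx).continuousAt.continuousWithinAt
  have hDomsub : ∀ p : ℝ × ℝ, p ∈ Dom ⊤ → p.2 ∈ Set.Ioi (0:ℝ) := fun p hp => hp.2.2
  have hcont1 : ContinuousOn (fun p : ℝ × ℝ => u0 p.2 + Cb * p.1) (Dom ⊤) :=
    (hu0c.comp continuous_snd.continuousOn hDomsub).add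
      (continuous_const.mul continuous_fst).continuousOn
  have hcont2 : ContinuousOn (fun p : ℝ × ℝ => u0 p.2 - Cb * p.1) (Dom ⊤) :=
    (hu0c.comp continuous_snd.continuousOn hDomsub).sub
      (continuous_const.mul continuous_fst).continuousOn
  have hinterior : ∀ t r : ℝ, 0 < t → 0 < r → Dom ⊤ ∈ 𝓝 (t, r) := by
    intro t r ht hr
    rw [mem_nhds_iff]
    refine ⟨Set.Ioi 0 ×ˢ Set.Ioi 0, ?_, isOpen_Ioi.prod isOpen_Ioi, ⟨ht, hr⟩⟩
    rintro ⟨a, b⟩ ⟨ha, hb⟩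
    exact ⟨le_of_lt ha, by simp [ENNReal.ofReal_lt_top], hb⟩
  have hφfacts : ∀ (φ : ℝ × ℝ → ℝ), ContDiff ℝ 2 φ → ∀ t r : ℝ,
      (∀ a : ℝ, deriv (fun s : ℝ => a * s - φ (s, r)) t = a - Dt φ t r) := by
    intro φ hφ t r a
    have hφd : Differentiable ℝ φ := hφ.differentiable (by norm_num)
    have hsl : DifferentiableAt ℝ (fun s => φ (s, r)) t :=
      (hφd (t, r)).comp t (differentiableAt_id.prodMk (differentiableAt_const r))
    have h1 : HasDerivAt (fun s : ℝ => a * s) a t := by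
      simpa using (hasDerivAt_id t).const_mul a
    exact (h1.sub hsl.hasDerivAt).deriv
  refine ⟨Cb, hCb, ⟨hcont1.lowerSemicontinuousOn, ?_⟩, ⟨hcont2.upperSemicontinuousOn, ?_⟩⟩
  · -- super-solution
    intro φ hφ t r hmem hminOn
    constructor
    · intro ht
      have hr : 0 < r := hmem.2.2
      have hnh := hinterior t r ht hr
      have hmin2 : IsLocalMin (fun p : ℝ × ℝ => u0 p.2 + Cb * p.1 - φ p) (t, r) :=
        hminOn.filter_mono (nhdsWithin_eq_nhds.mpr hnh).ge
      -- time derivative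
      have httend : Tendsto (fun s : ℝ => (s, r)) (𝓝 t) (𝓝 (t, r)) :=
        (continuous_id.prodMk continuous_const).tendsto t
      have hminT : IsLocalMin (fun s : ℝ => Cb * s - φ (s, r)) t := by
        have hev := httend.eventually hmin2
        exact hev.mono fun s hs => by simp only at hs ⊢; linarith
      have hDt : Dt φ t r = Cb := by
        have h0 := hminT.deriv_eq_zero
        rw [hφfacts φ hφ t r Cb] at h0
        linarith
      -- space slice
      have hrtend : Tendsto (fun ρ : ℝ => (t, ρ)) (𝓝 r) (𝓝 (t, r)) :=
        (continuous_const.prodMk continuous_id).tendsto r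
      set ψ : ℝ → ℝ := fun ρ => φ (t, ρ) - Cb * t with hψdef
      have hψc : ContDiff ℝ 2 ψ :=
        (hφ.comp (contDiff_const.prodMk contDiff_id)).sub contDiff_const
      have hminR : IsLocalMin (fun ρ => u0 ρ - ψ ρ) r := by
        have hev := hrtend.eventually hmin2
        exact hev.mono fun ρ hρ => by simp only [hψdef] at hρ ⊢; linarith
      have hderiv_fun : deriv ψ = fun ρ => deriv (fun ρ' => φ (t, ρ')) ρ := by
        funext ρ
        simp only [hψdef]
        exact deriv_sub_const _
      have hd1 : deriv ψ r = Dr φ t r := by rw [hderiv_fun]; rfl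
      have hd2 : deriv (deriv ψ) r = Drr φ t r := by rw [hderiv_fun]; rfl
      have hkey := hest1 r hr ψ hψc hminR
      rw [hd1, hd2] at hkey
      rw [hDt]
      calc Fbar c r (Dr φ t r) (Drr φ t r) ≤ Cb1 * r := hkey
        _ ≤ Cb * r := mul_le_mul_of_nonneg_right (le_max_left _ _) hr.le
        _ = r * Cb := mul_comm _ _
    · intro _
      simp
  · -- sub-solution
    intro φ hφ t r hmem hmaxOn
    constructor
    · intro ht
      have hr : 0 < r := hmem.2.2
      have hnh := hinterior t r ht hr
      have hmax2 : IsLocalMax (fun p : ℝ × ℝ => u0 p.2 - Cb * p.1 - φ p) (t, r) :=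
        hmaxOn.filter_mono (nhdsWithin_eq_nhds.mpr hnh).ge
      have httend : Tendsto (fun s : ℝ => (s, r)) (𝓝 t) (𝓝 (t, r)) :=
        (continuous_id.prodMk continuous_const).tendsto t
      have hmaxT : IsLocalMax (fun s : ℝ => (-Cb) * s - φ (s, r)) t := by
        have hev := httend.eventually hmax2
        exact hev.mono fun s hs => by simp only at hs ⊢; linarith
      have hDt : Dt φ t r = -Cb := by
        have h0 := hmaxT.deriv_eq_zero
        rw [hφfacts φ hφ t r (-Cb)] at h0
        linarith
      have hrtend : Tendsto (fun ρ : ℝ => (t, ρ)) (𝓝 r) (𝓝 (t, r)) :=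
        (continuous_const.prodMk continuous_id).tendsto r
      set ψ : ℝ → ℝ := fun ρ => -φ (t, ρ) - Cb * t with hψdef
      have hψc : ContDiff ℝ 2 ψ :=
        (hφ.comp (contDiff_const.prodMk contDiff_id)).neg.sub contDiff_const
      have hminR : IsLocalMin (fun ρ => (fun x => -u0 x) ρ - ψ ρ) r := by
        have hev := hrtend.eventually hmax2
        exact hev.mono fun ρ hρ => by simp only [hψdef] at hρ ⊢; linarith
      have hderiv_fun : deriv ψ = fun ρ => -(deriv (fun ρ' => φ (t, ρ')) ρ) := by
        funext ρ
        simp only [hψdef]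
        rw [deriv_sub_const]
        exact deriv.neg
      have hd1 : deriv ψ r = -(Dr φ t r) := by rw [hderiv_fun]; rfl
      have hd2 : deriv (deriv ψ) r = -(Drr φ t r) := by rw [hderiv_fun]; exact deriv.neg
      have hkey := hest2 r hr ψ hψc hminR
      rw [hd1, hd2, Fbar_neg] at hkey
      rw [hDt]
      have h2 : Cb2 * r ≤ Cb * r := mul_le_mul_of_nonneg_right (le_max_right _ _) hr.le
      have : r * -Cb = -(Cb * r) := by ring
      linarith
    · intro _
      simp
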